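/- Let A ⊆ ℝ^d, 0 < r < reach A, and a, b ∈ A with 0 < |b−a| < r. Then there exists a nonzero vector v ∈ Tan(A,a) such that the angle between b−a and v is less than (π/6)·(|b−a|/r). -/

import Mathlib

open Metric Set MeasureTheory
open scoped RealInnerProductSpace ENNReal NNReal

noncomputable section

abbrev Euc (d : ℕ) := EuclideanSpace ℝ (Fin d)

/-- Points of the ambient space having a unique nearest point in `A`. -/
def unp {d : ℕ} (A : Set (Euc d)) : Set (Euc d) :=
  {x | ∃! a, a ∈ A ∧ dist x a = Metric.infDist x A}

/-- Federer's local reach `reach (A, a)`. -/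
def reachAt {d : ℕ} (A : Set (Euc d)) (a : Euc d) : ℝ≥0∞ :=
  sSup {r : ℝ≥0∞ | ∀ x : Euc d, edist x a < r → x ∈ unp A}

/-- Federer's reach of a set. -/
def reach {d : ℕ} (A : Set (Euc d)) : ℝ≥0∞ := ⨅ a ∈ A, reachAt A a

/-- The tangent cone of `A` at `a`: `u` is a tangent vector iff `u = 0` or `u` is a limit of
`r i • (x i - a)` with `x i ∈ A \ {a}`, `x i → a`, `r i > 0`. -/
def tanCone {d : ℕ} (A : Set (Euc d)) (a : Euc d) : Set (Euc d) :=
  {u | u = 0 ∨ ∃ (x : ℕ → Euc d) (r : ℕ → ℝ),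
    (∀ n, x n ∈ A ∧ x n ≠ a) ∧
    Filter.Tendsto x Filter.atTop (nhds a) ∧
    (∀ n, 0 < r n) ∧
    Filter.Tendsto (fun n => r n • (x n - a)) Filter.atTop (nhds u)}

/-- The dimension of the tangent cone of `A` at `a`. -/
def tanDim {d : ℕ} (A : Set (Euc d)) (a : Euc d) : ℕ :=
  Module.finrank ℝ (Submodule.span ℝ (tanCone A a))

/-- The set of points of `A` at which the tangent cone has dimension `k`. -/
def Tk {d : ℕ} (A : Set (Euc d)) (k : ℕ) : Set (Euc d) :=
  {x | x ∈ A ∧ tanDim A x = k}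

/-- Whitney's fullness `Θ(σ) = vol_k(σ) / (diam σ)^k` of a set. -/
def fullness {d : ℕ} (k : ℕ) (s : Set (Euc d)) : ℝ :=
  (μH[(k : ℝ)] s).toReal / (Metric.diam s) ^ k

/-- The metric `ρ_k` on the Grassmannian of subspaces of `ℝ^d`. -/
def grassDist {d : ℕ} (U V : Submodule ℝ (Euc d)) : ℝ :=
  max (sSup ((fun u => Metric.infDist u (V : Set (Euc d))) '' {u | u ∈ U ∧ ‖u‖ = 1}))
      (sSup ((fun v => Metric.infDist v (U : Set (Euc d))) '' {v | v ∈ V ∧ ‖v‖ = 1}))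

namespace S4
open Filter Topology
set_option maxHeartbeats 1000000

variable {d : ℕ} {A : Set (Euc d)} {r : ℝ}

lemma norm_conv (v h : Euc d) (hv : v ≠ 0) :
    ‖v‖ + ⟪(‖v‖⁻¹ • v : Euc d), h⟫ ≤ ‖v + h‖ := by
  have h1 : ⟪v, v + h⟫ ≤ ‖v‖ * ‖v + h‖ := real_inner_le_norm _ _
  have h2 : ⟪v, v + h⟫ = ‖v‖^2 + ⟪v, h⟫ := by
    rw [inner_add_right, real_inner_self_eq_norm_sq]
  have hv' : (0:ℝ) < ‖v‖ := norm_pos_iff.mpr hv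
  rw [real_inner_smul_left]
  rw [h2] at h1
  rw [← mul_le_mul_iff_right₀ hv', mul_add]
  have h3 : ‖v‖ * (‖v‖⁻¹ * ⟪v, h⟫) = ⟪v, h⟫ := by field_simp
  nlinarith [h1]

lemma A_closed (hr : 0 < r) (hne : A.Nonempty)
    (hU : ∀ x, Metric.infDist x A < r → x ∈ unp A) : IsClosed A := by
  rw [← closure_subset_iff_isClosed]
  intro x hx
  have h0 : Metric.infDist x A = 0 :=
    (Metric.mem_closure_iff_infDist_zero hne).mp hx
  obtain ⟨p, ⟨hpA, hpd⟩, -⟩ := hU x (by rw [h0]; exact hr)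
  rw [h0, dist_eq_zero] at hpd
  rwa [hpd]

lemma foot_exists (hA : IsClosed A) (hne : A.Nonempty) (x : Euc d) :
    ∃ p, p ∈ A ∧ dist x p = Metric.infDist x A := by
  obtain ⟨y, hy, h⟩ := hA.exists_infDist_eq_dist hne x
  exact ⟨y, hy, h.symm⟩

lemma foot_unique (hU : ∀ x, Metric.infDist x A < r → x ∈ unp A) {x p q : Euc d}
    (hx : Metric.infDist x A < r)
    (hp : p ∈ A ∧ dist x p = Metric.infDist x A)
    (hq : q ∈ A ∧ dist x q = Metric.infDist x A) : p = q := by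
  obtain ⟨y, -, hyu⟩ := hU x hx
  rw [hyu p hp, hyu q hq]


lemma foot_cont (hA : IsClosed A) (hne : A.Nonempty)
    (hU : ∀ x, Metric.infDist x A < r → x ∈ unp A) {z q : Euc d}
    (hzr : Metric.infDist z A < r)
    (hq : q ∈ A ∧ dist z q = Metric.infDist z A) :
    ∀ ε > 0, ∃ δ > 0, ∀ z' q', dist z' z < δ → q' ∈ A →
      dist z' q' = Metric.infDist z' A → dist q' q < ε := by
  by_contra hc
  push_neg at hc
  obtain ⟨ε, hε, hcc⟩ := hc
  choose z' q' hd hqA hqf hfar using fun n : ℕ => hcc (1/(n+1)) (by positivity)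
  have hn1 : Tendsto (fun n : ℕ => 1/((n:ℝ)+1)) atTop (𝓝 0) :=
    tendsto_one_div_add_atTop_nhds_zero_nat
  have hzlim : Tendsto z' atTop (𝓝 z) := by
    rw [tendsto_iff_dist_tendsto_zero]
    exact squeeze_zero (fun n => dist_nonneg) (fun n => (hd n).le) hn1
  have hbd : ∀ n, q' n ∈ closedBall z (Metric.infDist z A + 2) := by
    intro n
    have h1 : dist (q' n) z ≤ dist (q' n) (z' n) + dist (z' n) z := dist_triangle _ _ _
    have h2 : Metric.infDist (z' n) A ≤ Metric.infDist z A + dist (z' n) z :=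
      Metric.infDist_le_infDist_add_dist
    have h3 : dist (z' n) z ≤ 1 := by
      have := (hd n).le
      have h4 : 1/((n:ℝ)+1) ≤ 1 := by
        rw [div_le_one (by positivity)]; linarith [Nat.cast_nonneg (α := ℝ) n]
      linarith
    rw [mem_closedBall]
    calc dist (q' n) z ≤ dist (q' n) (z' n) + dist (z' n) z := h1
      _ = Metric.infDist (z' n) A + dist (z' n) z := by rw [dist_comm, hqf n]
      _ ≤ Metric.infDist z A + 2 * dist (z' n) z := by linarith
      _ ≤ Metric.infDist z A + 2 := by linarith
  obtain ⟨qb, -, φ, hφ, hqlim⟩ :=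
    tendsto_subseq_of_bounded Metric.isBounded_closedBall hbd
  have hqbA : qb ∈ A :=
    hA.mem_of_tendsto hqlim (Filter.Eventually.of_forall fun n => hqA (φ n))
  have hz'φ : Tendsto (fun n => z' (φ n)) atTop (𝓝 z) := hzlim.comp hφ.tendsto_atTop
  have hdistlim : Tendsto (fun n => dist (z' (φ n)) (q' (φ n))) atTop (𝓝 (dist z qb)) :=
    hz'φ.dist hqlim
  have hinflim : Tendsto (fun n => dist (z' (φ n)) (q' (φ n))) atTop
      (𝓝 (Metric.infDist z A)) := by
    have : Tendsto (fun n => Metric.infDist (z' (φ n)) A) atTop (𝓝 (Metric.infDist z A)) :=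
      ((continuous_infDist_pt A).tendsto z).comp hz'φ
    simpa only [hqf] using this
  have hfoot : dist z qb = Metric.infDist z A := tendsto_nhds_unique hdistlim hinflim
  have : qb = q := foot_unique hU hzr ⟨hqbA, hfoot⟩ hq
  subst this
  have hqq : Tendsto (fun n => dist (q' (φ n)) qb) atTop (𝓝 0) := by
    simpa using hqlim.dist (tendsto_const_nhds (x := qb))
  have := (hqq.eventually (eventually_lt_nhds hε)).exists
  obtain ⟨n, hn⟩ := this
  exact absurd (hfar (φ n)) (not_le.mpr hn)


/-- Directional lower bound on growth of the distance function along the outward normal. -/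
lemma dld (hA : IsClosed A) (hne : A.Nonempty)
    (hU : ∀ x, Metric.infDist x A < r → x ∈ unp A) {z q : Euc d}
    (h0 : 0 < Metric.infDist z A) (hzr : Metric.infDist z A < r)
    (hq : q ∈ A ∧ dist z q = Metric.infDist z A) {lam : ℝ} (hlam : lam < 1) :
    ∃ η₀ > 0, ∀ η, 0 < η → η ≤ η₀ →
      Metric.infDist z A + lam * η ≤
        Metric.infDist (z + η • (‖z - q‖⁻¹ • (z - q))) A := by
  set u : Euc d := ‖z - q‖⁻¹ • (z - q) with hu
  have hzq : z ≠ q := by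
    intro h
    have h2 := hq.2
    rw [h, dist_self] at h2
    rw [h] at h0
    exact absurd h2.symm h0.ne'
  have hzqn : (0:ℝ) < ‖z - q‖ := by rw [norm_pos_iff, sub_ne_zero]; exact hzq
  have hun : ‖u‖ = 1 := by
    rw [hu, norm_smul, norm_inv, norm_norm, inv_mul_cancel₀ hzqn.ne']
  -- continuity of y ↦ ⟪ ‖z-y‖⁻¹ • (z-y), u⟫ at q, with value 1
  have hgq : ⟪(‖z - q‖⁻¹ • (z - q) : Euc d), u⟫ = 1 := by
    rw [← hu, real_inner_self_eq_norm_sq, hun]; norm_num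
  have hcont : ContinuousAt (fun y : Euc d => ⟪(‖z - y‖⁻¹ • (z - y) : Euc d), u⟫) q := by
    apply ContinuousAt.inner
    · exact ContinuousAt.smul
        ((continuousAt_const.sub continuousAt_id).norm.inv₀ hzqn.ne')
        (continuousAt_const.sub continuousAt_id)
    · exact continuousAt_const
  have hev : ∀ᶠ y : Euc d in 𝓝 q, lam < ⟪(‖z - y‖⁻¹ • (z - y) : Euc d), u⟫ := by
    refine hcont.eventually (p := fun t => lam < t) ?_
    show ∀ᶠ t : ℝ in 𝓝 (⟪(‖z - q‖⁻¹ • (z - q) : Euc d), u⟫), lam < t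
    rw [hgq]
    exact eventually_gt_nhds hlam
  rw [Metric.eventually_nhds_iff] at hev
  obtain ⟨ε, hε, hball⟩ := hev
  obtain ⟨δ, hδ, hfc⟩ := foot_cont hA hne hU hzr hq ε hε
  refine ⟨δ/2, by positivity, fun η hη1 hη2 => ?_⟩
  set z' := z + η • u with hz'
  have hdzz : dist z' z = η := by
    rw [hz', dist_eq_norm, add_sub_cancel_left, norm_smul, hun,
      Real.norm_eq_abs, abs_of_pos hη1, mul_one]
  obtain ⟨q', hq'A, hq'f⟩ := foot_exists hA hne z'
  have hq'q : dist q' q < ε := hfc z' q' (by rw [hdzz]; linarith) hq'A hq'f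
  have hkey : lam < ⟪(‖z - q'‖⁻¹ • (z - q') : Euc d), u⟫ := hball hq'q
  have hzq' : z - q' ≠ 0 := by
    rw [sub_ne_zero]
    intro h
    have : Metric.infDist z A ≤ dist z q' := Metric.infDist_le_dist_of_mem hq'A
    rw [← h, dist_self] at this; linarith
  have hconv := norm_conv (z - q') (η • u) hzq'
  have hsub : (z - q') + η • u = z' - q' := by rw [hz']; abel
  rw [hsub] at hconv
  have hinner : ⟪(‖z - q'‖⁻¹ • (z - q') : Euc d), η • u⟫
      = η * ⟪(‖z - q'‖⁻¹ • (z - q') : Euc d), u⟫ := real_inner_smul_right _ _ _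
  have hle1 : Metric.infDist z A ≤ ‖z - q'‖ := by
    rw [← dist_eq_norm]; exact Metric.infDist_le_dist_of_mem hq'A
  have hfin : Metric.infDist z' A = ‖z' - q'‖ := by rw [← dist_eq_norm, hq'f]
  rw [hfin]
  have : η * lam ≤ η * ⟪(‖z - q'‖⁻¹ • (z - q') : Euc d), u⟫ :=
    mul_le_mul_of_nonneg_left hkey.le hη1.le
  calc Metric.infDist z A + lam * η ≤ ‖z - q'‖ + η * ⟪(‖z - q'‖⁻¹ • (z - q') : Euc d), u⟫ := by
        rw [mul_comm lam η]; linarith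
    _ ≤ ‖z' - q'‖ := by rw [← hinner]; exact hconv


/-- extension: from a point at distance m one can reach distance m + ρ on the sphere of
radius ρ, as long as m + ρ < r. -/
lemma ext_pt (hA : IsClosed A) (hne : A.Nonempty)
    (hU : ∀ x, Metric.infDist x A < r → x ∈ unp A) {y : Euc d} {ρ : ℝ}
    (h0 : 0 < Metric.infDist y A) (hρ : 0 < ρ) (hyr : Metric.infDist y A + ρ < r) :
    ∃ z, dist z y = ρ ∧ Metric.infDist z A = Metric.infDist y A + ρ := by
  set m := Metric.infDist y A with hm
  have hcont : Continuous fun w : Euc d => Metric.infDist w A := continuous_infDist_pt A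
  -- Step 1: for every lam < 1 there is a sphere point with infDist ≥ m + lam * ρ
  have step : ∀ lam : ℝ, 0 ≤ lam → lam < 1 →
      ∃ z, dist z y = ρ ∧ m + lam * ρ ≤ Metric.infDist z A := by
    intro lam hl0 hl1
    set ψ : Euc d → ℝ := fun w => Metric.infDist w A - lam * dist w y with hψ
    have hψc : Continuous ψ := hcont.sub (continuous_const.mul (continuous_id.dist continuous_const))
    obtain ⟨zl, hzlK, hmax⟩ := (isCompact_closedBall y ρ).exists_isMaxOn
      ⟨y, mem_closedBall_self hρ.le⟩ hψc.continuousOn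
    have hψy : ψ y = m := by simp [hψ, hm]
    have hz1 : m ≤ ψ zl := by
      have h : ψ y ≤ ψ zl := hmax (mem_closedBall_self hρ.le)
      rwa [hψy] at h
    have hzd : dist zl y ≤ ρ := mem_closedBall.mp hzlK
    have hinf1 : m ≤ Metric.infDist zl A := by
      have : lam * dist zl y ≥ 0 := mul_nonneg hl0 dist_nonneg
      have := hz1
      rw [hψ] at this
      simp only at this
      linarith
    have hinfpos : 0 < Metric.infDist zl A := lt_of_lt_of_le h0 hinf1
    have hinflt : Metric.infDist zl A < r := by
      have : Metric.infDist zl A ≤ m + dist zl y := Metric.infDist_le_infDist_add_dist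
      linarith
    -- boundary claim
    have hbd : dist zl y = ρ := by
      by_contra hne2
      have hlt : dist zl y < ρ := lt_of_le_of_ne hzd hne2
      obtain ⟨ql, hqlA, hqlf⟩ := foot_exists hA hne zl
      set lam' := (1 + lam)/2 with hlam'
      have hlam'1 : lam' < 1 := by rw [hlam']; linarith
      obtain ⟨η₀, hη₀, hdld⟩ := dld hA hne hU hinfpos hinflt ⟨hqlA, hqlf⟩ hlam'1
      set η := min η₀ (ρ - dist zl y) with hη
      have hηpos : 0 < η := lt_min hη₀ (by linarith)
      set w := zl + η • (‖zl - ql‖⁻¹ • (zl - ql)) with hw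
      have hwzl : dist w zl = η := by
        have hzlql : zl ≠ ql := by
          intro h
          have h2 : (0:ℝ) = Metric.infDist zl A := by rw [← hqlf, h, dist_self]
          exact absurd h2.symm hinfpos.ne'
        have hn : ‖(‖zl - ql‖⁻¹ • (zl - ql) : Euc d)‖ = 1 := by
          rw [norm_smul, norm_inv, norm_norm, inv_mul_cancel₀]
          rw [norm_ne_zero_iff, sub_ne_zero]
          exact hzlql
        rw [hw, dist_eq_norm, add_sub_cancel_left, norm_smul, hn, Real.norm_eq_abs,
          abs_of_pos hηpos, mul_one]
      have hwK : w ∈ closedBall y ρ := by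
        rw [mem_closedBall]
        calc dist w y ≤ dist w zl + dist zl y := dist_triangle _ _ _
          _ = η + dist zl y := by rw [hwzl]
          _ ≤ (ρ - dist zl y) + dist zl y := by
              have := min_le_right η₀ (ρ - dist zl y); linarith
          _ = ρ := by ring
      have hup : Metric.infDist zl A + lam' * η ≤ Metric.infDist w A :=
        hdld η hηpos (min_le_left _ _)
      have hdown : ψ w ≤ ψ zl := hmax hwK
      rw [hψ] at hdown
      simp only at hdown
      have hdw : dist w y ≤ dist zl y + η := by
        have := dist_triangle w zl y
        rw [hwzl] at this
        linarith
      -- infDist w ≤ infDist zl + lam * (dist w y - dist zl y) ≤ infDist zl + lam * η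
      have : Metric.infDist w A ≤ Metric.infDist zl A + lam * η := by
        have h5 : lam * dist w y ≤ lam * (dist zl y + η) := mul_le_mul_of_nonneg_left hdw hl0
        nlinarith
      have : lam' * η ≤ lam * η := by linarith
      have : lam' ≤ lam := le_of_mul_le_mul_right (by linarith) hηpos
      rw [hlam'] at this
      linarith
    refine ⟨zl, hbd, ?_⟩
    have := hz1
    rw [hψ] at this
    simp only [hbd] at this
    linarith
  -- Step 2: take lam_n → 1
  have hlamn : ∀ n : ℕ, (0:ℝ) ≤ 1 - 1/(n+2) ∧ (1 - 1/((n:ℝ)+2)) < 1 := by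
    intro n
    constructor
    · have h1 : (1:ℝ)/((n:ℝ)+2) ≤ 1 := by
        rw [div_le_one (by positivity)]
        linarith [Nat.cast_nonneg (α := ℝ) n]
      linarith
    · have : (0:ℝ) < 1/((n:ℝ)+2) := by positivity
      linarith
  choose zf hzf1 hzf2 using fun n : ℕ => step (1 - 1/((n:ℝ)+2)) (hlamn n).1 (hlamn n).2
  have hbdd : ∀ n, zf n ∈ closedBall y ρ := fun n => mem_closedBall.mpr (hzf1 n).le
  obtain ⟨z, -, φ, hφ, hzlim⟩ := tendsto_subseq_of_bounded Metric.isBounded_closedBall hbdd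
  have hdz : dist z y = ρ := by
    have h1 : Tendsto (fun n => dist (zf (φ n)) y) atTop (𝓝 (dist z y)) :=
      hzlim.dist tendsto_const_nhds
    have h2 : Tendsto (fun n => dist (zf (φ n)) y) atTop (𝓝 ρ) := by
      simp only [hzf1]; exact tendsto_const_nhds
    exact tendsto_nhds_unique h1 h2
  refine ⟨z, hdz, ?_⟩
  have hub : Metric.infDist z A ≤ m + ρ := by
    have := Metric.infDist_le_infDist_add_dist (x := z) (y := y) (s := A)
    rw [hdz] at this
    linarith
  have hlb : m + ρ ≤ Metric.infDist z A := by
    have h1 : Tendsto (fun n => Metric.infDist (zf (φ n)) A) atTop (𝓝 (Metric.infDist z A)) :=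
      (hcont.tendsto z).comp hzlim
    have h2 : Tendsto (fun n => m + (1 - 1/((φ n:ℝ)+2)) * ρ) atTop (𝓝 (m + ρ)) := by
      have h3 : Tendsto (fun n : ℕ => 1/((n:ℝ)+2)) atTop (𝓝 0) := by
        apply squeeze_zero (fun n => by positivity) (g := fun n : ℕ => 1/((n:ℝ)+1))
        · intro n
          apply div_le_div_of_nonneg_left one_pos.le (by positivity)
          linarith
        · exact tendsto_one_div_add_atTop_nhds_zero_nat
      have h4 : Tendsto (fun n : ℕ => 1/((φ n:ℝ)+2)) atTop (𝓝 0) :=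
        h3.comp hφ.tendsto_atTop
      have h5 : Tendsto (fun n : ℕ => m + (1 - 1/((φ n:ℝ)+2)) * ρ) atTop
          (𝓝 (m + (1 - 0) * ρ)) := by
        exact (((tendsto_const_nhds (x := (1:ℝ))).sub h4).mul_const ρ).const_add m
      simpa using h5
    exact le_of_tendsto_of_tendsto h2 h1
      (Filter.Eventually.of_forall fun n => hzf2 (φ n))
  linarith

/-- Rolling: there is a point at distance exactly τ whose nearness is witnessed through x. -/
lemma sup_reach (hA : IsClosed A) (hne : A.Nonempty)
    (hU : ∀ x, Metric.infDist x A < r → x ∈ unp A) {x : Euc d} {τ : ℝ}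
    (h0 : 0 < Metric.infDist x A) (hτ1 : Metric.infDist x A < τ) (hτr : τ < r) :
    ∃ y, Metric.infDist y A = τ ∧ Metric.infDist x A + dist y x ≤ Metric.infDist y A := by
  set δ := Metric.infDist x A with hδ
  have hcont : Continuous fun w : Euc d => Metric.infDist w A := continuous_infDist_pt A
  set S := {y : Euc d | δ + dist y x ≤ Metric.infDist y A ∧ Metric.infDist y A ≤ τ} with hS
  have hxS : x ∈ S := ⟨by simp [hδ], hτ1.le⟩
  have hSsub : S ⊆ closedBall x (τ - δ) := by
    intro y hy
    rw [mem_closedBall]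
    have h1 := hy.1
    have h2 := hy.2
    linarith
  have hScl : IsClosed S := by
    apply IsClosed.inter
    · exact isClosed_le (continuous_const.add (continuous_id.dist continuous_const)) hcont
    · exact isClosed_le hcont continuous_const
  have hcomp : IsCompact S := (isCompact_closedBall x (τ - δ)).of_isClosed_subset hScl hSsub
  obtain ⟨y, hyS, hymax⟩ := hcomp.exists_isMaxOn ⟨x, hxS⟩ hcont.continuousOn
  rcases eq_or_lt_of_le hyS.2 with heq | hlt
  · exact ⟨y, heq, hyS.1⟩
  · exfalso
    have hy0 : 0 < Metric.infDist y A := by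
      have := hyS.1
      have := dist_nonneg (x := y) (y := x)
      linarith
    obtain ⟨z, hz1, hz2⟩ := ext_pt hA hne hU hy0 (sub_pos.mpr hlt)
      (by linarith : Metric.infDist y A + (τ - Metric.infDist y A) < r)
    have hzS : z ∈ S := by
      constructor
      · have h1 : dist z x ≤ dist z y + dist y x := dist_triangle _ _ _
        have h2 := hyS.1
        rw [hz1] at h1
        rw [hz2]
        linarith
      · rw [hz2]; simp
    have h3 : Metric.infDist z A ≤ Metric.infDist y A := hymax hzS
    rw [hz2] at h3
    linarith

/-- Federer's normal inequality. -/
lemma normal_ineq (hr : 0 < r) (hA : IsClosed A) (hne : A.Nonempty)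
    (hU : ∀ x, Metric.infDist x A < r → x ∈ unp A) {x p c : Euc d}
    (h0 : 0 < Metric.infDist x A) (hxr : Metric.infDist x A < r)
    (hp : p ∈ A ∧ dist x p = Metric.infDist x A) (hc : c ∈ A) :
    ⟪x - p, c - p⟫ * (2*r) ≤ Metric.infDist x A * ‖c - p‖^2 := by
  set δ := Metric.infDist x A with hδdef
  set P := (⟪x - p, c - p⟫ : ℝ) with hP
  set C := ‖c - p‖^2 with hC
  have hC0 : 0 ≤ C := by rw [hC]; positivity
  have key : ∀ τ : ℝ, δ < τ → τ < r → P * (2*τ) ≤ δ * C := by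
    intro τ h1 h2
    obtain ⟨y, hyτ, hyineq⟩ := sup_reach hA hne hU h0 h1 h2
    rw [hyτ, ← hδdef] at hyineq
    have hyx : dist y x ≤ τ - δ := by linarith
    have hyp_ge : τ ≤ dist y p := by
      rw [← hyτ]; exact Metric.infDist_le_dist_of_mem hp.1
    have hyp_le : dist y p ≤ τ := by
      calc dist y p ≤ dist y x + dist x p := dist_triangle _ _ _
        _ ≤ (τ - δ) + δ := by rw [hp.2]; linarith
        _ = τ := by ring
    have hyp : dist y p = τ := le_antisymm hyp_le hyp_ge
    have hyx_ge : τ - δ ≤ dist y x := by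
      have := dist_triangle y x p
      rw [hyp, hp.2] at this
      linarith
    have hyx_eq : dist y x = τ - δ := le_antisymm hyx hyx_ge
    -- now pure vector algebra
    have hnyp : ‖y - p‖ = τ := by rw [← dist_eq_norm]; exact hyp
    have hnyx : ‖y - x‖ = τ - δ := by rw [← dist_eq_norm]; exact hyx_eq
    have hnxp : ‖x - p‖ = δ := by rw [← dist_eq_norm]; exact hp.2
    have hδ0 : 0 < δ := h0
    have hτ0 : 0 < τ := lt_trans hδ0 h1
    have hI : ⟪y - x, x - p⟫ = δ * (τ - δ) := by
      have hsplit : y - p = (y - x) + (x - p) := by abel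
      have h4 := norm_add_sq_real (y - x) (x - p)
      rw [← hsplit, hnyp, hnyx, hnxp] at h4
      nlinarith
    have hvec : δ • (y - x) = (τ - δ) • (x - p) := by
      have hU : ‖δ • (y - x)‖ = δ * (τ - δ) := by
        rw [norm_smul, Real.norm_eq_abs, abs_of_pos hδ0, hnyx]
      have hV : ‖(τ - δ) • (x - p)‖ = (τ - δ) * δ := by
        rw [norm_smul, Real.norm_eq_abs, abs_of_pos (by linarith : (0:ℝ) < τ - δ), hnxp]
      have hUV : ⟪(δ • (y - x) : Euc d), (τ - δ) • (x - p)⟫ = δ*(τ-δ)*(δ*(τ-δ)) := by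
        rw [real_inner_smul_left, real_inner_smul_right, hI]; ring
      have h5 : ‖δ • (y - x) - (τ - δ) • (x - p)‖^2 = 0 := by
        rw [norm_sub_sq_real, hU, hV, hUV]; ring
      have h6 : ‖δ • (y - x) - (τ - δ) • (x - p)‖ = 0 := by
        have := sq_eq_zero_iff.mp h5
        exact this
      rw [norm_eq_zero, sub_eq_zero] at h6
      exact h6
    -- y = x + ((τ-δ)/δ) • (x - p), hence y - c = (τ/δ) • (x-p) + (p - c)
    have hyc : y - c = (τ/δ) • (x - p) - (c - p) := by
      have h7 : y - x = (δ⁻¹ * (τ - δ)) • (x - p) := by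
        rw [mul_smul, ← hvec, smul_smul, inv_mul_cancel₀ hδ0.ne', one_smul]
      have h8 : y = x + (δ⁻¹ * (τ - δ)) • (x - p) := by
        rw [← h7]; abel
      rw [h8]
      have h9 : (τ/δ) • (x - p) = (x - p) + (δ⁻¹ * (τ - δ)) • (x - p) := by
        have h9a : (τ/δ) = 1 + δ⁻¹ * (τ - δ) := by field_simp; ring
        rw [h9a, add_smul, one_smul]
      rw [h9]
      abel
    have hycn : τ ≤ ‖y - c‖ := by
      rw [← dist_eq_norm, ← hyτ]
      exact Metric.infDist_le_dist_of_mem hc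
    have hexp : ‖y - c‖^2 = τ^2 - 2*(τ/δ)*P + C := by
      have hUn : ‖(τ/δ) • (x - p)‖ = τ := by
        rw [norm_smul, Real.norm_eq_abs, abs_of_pos (by positivity : (0:ℝ) < τ/δ), hnxp]
        field_simp
      have hUV2 : ⟪((τ/δ) • (x - p) : Euc d), c - p⟫ = (τ/δ) * P := by
        rw [real_inner_smul_left, ← hP]
      rw [hyc, norm_sub_sq_real, hUn, hUV2, ← hC]
      ring
    have h10 : τ^2 ≤ ‖y - c‖^2 := by nlinarith [hycn, hτ0]
    rw [hexp] at h10
    -- 2*(τ/δ)*P ≤ C  ⇒  P * 2τ ≤ δ C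
    have h11 : 2*(τ/δ)*P ≤ C := by linarith
    have h12 : (2*(τ/δ)*P) * δ ≤ C * δ := mul_le_mul_of_nonneg_right h11 hδ0.le
    have h13 : (2*(τ/δ)*P) * δ = P * (2*τ) := by field_simp
    rw [h13] at h12
    linarith [h12]
  -- pass to the limit τ → r
  rcases le_or_gt P 0 with hP0 | hP0
  · nlinarith [h0]
  · by_contra hco
    push_neg at hco
    -- δ * C < P * (2r)
    set T := δ * C / (2*P) with hT
    have hTr : T < r := by
      rw [hT, div_lt_iff₀ (by positivity)]
      nlinarith
    set τ := (max δ T + r)/2 with hτ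
    have hmaxr : max δ T < r := max_lt hxr hTr
    have hτ1 : δ < τ := by
      have := le_max_left δ T
      rw [hτ]; linarith
    have hτ2 : τ < r := by rw [hτ]; linarith
    have := key τ hτ1 hτ2
    have hTτ : T < τ := by
      have := le_max_right δ T
      rw [hτ]; linarith
    rw [hT, div_lt_iff₀ (by positivity)] at hTτ
    nlinarith

lemma hU_of_reach (hr : 0 < r) (hrA : ENNReal.ofReal r < reach A) (hne : A.Nonempty) :
    ∀ x, Metric.infDist x A < r → x ∈ unp A := by
  intro x hx
  obtain ⟨a', ha'A, ha'⟩ := (Metric.infDist_lt_iff hne).mp hx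
  have h1 : ENNReal.ofReal r < reachAt A a' :=
    lt_of_lt_of_le hrA (iInf₂_le a' ha'A)
  rw [reachAt, lt_sSup_iff] at h1
  obtain ⟨ρ, hρmem, hρ⟩ := h1
  refine hρmem x (lt_trans ?_ hρ)
  rw [edist_dist]
  exact (ENNReal.ofReal_lt_ofReal_iff hr).mpr ha'


end S4

open S4 Filter Topology in
set_option maxHeartbeats 1600000 in
theorem stmt4 {d : ℕ} (A : Set (Euc d)) (r : ℝ) (hr : 0 < r)
    (hrA : ENNReal.ofReal r < reach A) (a b : Euc d) (ha : a ∈ A) (hb : b ∈ A)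
    (hab : b ≠ a) (hlt : ‖b - a‖ < r) :
    ∃ v ∈ tanCone A a, v ≠ 0 ∧
      InnerProductGeometry.angle (b - a) v < Real.pi / 6 * (‖b - a‖ / r) := by
  set e := b - a with he
  have hE : 0 < ‖e‖ := norm_pos_iff.mpr (sub_ne_zero.mpr hab)
  set E := ‖e‖ with hEdef
  have hAne : A.Nonempty := ⟨a, ha⟩
  have hU := hU_of_reach hr hrA hAne
  have hA : IsClosed A := A_closed hr hAne hU
  set t : ℕ → ℝ := fun n => 1/(4*((n:ℝ)+1)) with ht
  have ht0 : ∀ n, 0 < t n := fun n => by rw [ht]; positivity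
  have ht4 : ∀ n, t n ≤ 1/4 := by
    intro n
    rw [ht]
    simp only
    rw [div_le_div_iff₀ (by positivity) (by norm_num)]
    have : (0:ℝ) ≤ (n:ℝ) := Nat.cast_nonneg n
    linarith
  set q : ℕ → Euc d := fun n => a + (t n) • e with hq
  choose p hpA hpf using fun n => foot_exists hA hAne (q n)
  set δ : ℕ → ℝ := fun n => Metric.infDist (q n) A with hδ
  have hq_a : ∀ n, dist (q n) a = t n * E := by
    intro n
    rw [hq]
    simp only
    rw [dist_eq_norm, add_sub_cancel_left, norm_smul, Real.norm_eq_abs,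
      abs_of_pos (ht0 n), ← hEdef]
  have hδle : ∀ n, δ n ≤ t n * E := by
    intro n
    rw [hδ]
    simp only
    rw [← hq_a n]
    exact Metric.infDist_le_dist_of_mem ha
  have hδ0 : ∀ n, 0 ≤ δ n := fun n => Metric.infDist_nonneg
  have htE : ∀ n, t n * E ≤ E/4 := by
    intro n
    have := ht4 n
    nlinarith [hE]
  have hδr : ∀ n, δ n < r := by
    intro n
    have h1 := hδle n
    have h2 := htE n
    linarith [hE, hlt]
  have hdqp : ∀ n, dist (q n) (p n) = δ n := fun n => hpf n
  -- the key Federer bound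
  have hkey : ∀ n, δ n * (2*r) ≤ (1 - t n)*‖a - p n‖^2 + (t n)*‖b - p n‖^2 := by
    intro n
    rcases eq_or_lt_of_le (hδ0 n) with h0 | h0
    · rw [← h0, zero_mul]
      have h1 : 0 ≤ (1 - t n) := by linarith [ht4 n]
      have h2 := (ht0 n).le
      exact add_nonneg (mul_nonneg h1 (sq_nonneg _)) (mul_nonneg h2 (sq_nonneg _))
    · have hna := normal_ineq hr hA hAne hU h0 (hδr n) ⟨hpA n, hpf n⟩ ha
      have hnb := normal_ineq hr hA hAne hU h0 (hδr n) ⟨hpA n, hpf n⟩ hb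
      have hcomb : (⟪q n - p n, q n - p n⟫:ℝ)
          = (1 - t n) * ⟪q n - p n, a - p n⟫ + t n * ⟪q n - p n, b - p n⟫ := by
        rw [← real_inner_smul_right, ← real_inner_smul_right, ← inner_add_right]
        congr 1
        rw [hq, he]
        simp only
        module
      have hself : (⟪q n - p n, q n - p n⟫:ℝ) = δ n^2 := by
        rw [real_inner_self_eq_norm_sq, ← dist_eq_norm, hdqp n]
      have h1 : 0 ≤ (1 - t n) := by linarith [ht4 n]
      have h2 := (ht0 n).le
      have hga : (1 - t n) * (⟪q n - p n, a - p n⟫ * (2*r))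
          ≤ (1 - t n) * (δ n * ‖a - p n‖^2) := mul_le_mul_of_nonneg_left hna h1
      have hgb : t n * (⟪q n - p n, b - p n⟫ * (2*r))
          ≤ t n * (δ n * ‖b - p n‖^2) := mul_le_mul_of_nonneg_left hnb h2
      have hsum : δ n^2 * (2*r) ≤ δ n * ((1 - t n)*‖a - p n‖^2 + t n*‖b - p n‖^2) := by
        nlinarith [hga, hgb, hcomb, hself]
      have := mul_le_mul_of_nonneg_left hsum (le_of_lt (inv_pos.mpr h0))
      calc δ n * (2*r) = (δ n)⁻¹ * (δ n^2 * (2*r)) := by field_simp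
        _ ≤ (δ n)⁻¹ * (δ n * ((1 - t n)*‖a - p n‖^2 + t n*‖b - p n‖^2)) := this
        _ = (1 - t n)*‖a - p n‖^2 + t n*‖b - p n‖^2 := by field_simp
  have hap : ∀ n, ‖a - p n‖ ≤ 2*(t n)*E := by
    intro n
    have h1 : dist a (p n) ≤ dist a (q n) + dist (q n) (p n) := dist_triangle _ _ _
    rw [dist_comm a (q n), hq_a n, hdqp n] at h1
    rw [← dist_eq_norm]
    linarith [hδle n]
  have hbq : ∀ n, dist b (q n) = (1 - t n) * E := by
    intro n
    rw [hq]
    simp only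
    rw [dist_eq_norm]
    have : b - (a + t n • e) = (1 - t n) • e := by rw [he]; module
    rw [this, norm_smul, Real.norm_eq_abs, abs_of_pos (by linarith [ht4 n] : 0 < 1 - t n), ← hEdef]
  have hbp : ∀ n, ‖b - p n‖ ≤ E := by
    intro n
    have h1 : dist b (p n) ≤ dist b (q n) + dist (q n) (p n) := dist_triangle _ _ _
    rw [hbq n, hdqp n] at h1
    rw [← dist_eq_norm]
    have := hδle n
    nlinarith [hE]
  have hδb : ∀ n, δ n * (2*r) ≤ t n * E^2 * (4*(t n) + 1) := by
    intro n
    have h1 := hkey n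
    have h2 := hap n
    have h3 := hbp n
    have h4 : ‖a - p n‖^2 ≤ (2*(t n)*E)^2 := by
      nlinarith [norm_nonneg (a - p n), h2]
    have h5 : ‖b - p n‖^2 ≤ E^2 := by
      nlinarith [norm_nonneg (b - p n), h3]
    have h6 : 0 ≤ 1 - t n := by linarith [ht4 n]
    nlinarith [mul_le_mul_of_nonneg_left h4 h6, mul_le_mul_of_nonneg_left h5 (ht0 n).le,
      sq_nonneg (t n * E), (ht0 n)]
  have hδlt : ∀ n, δ n < t n * E := by
    intro n
    have h1 := hδb n
    have h2 := ht4 n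
    have h3 := ht0 n
    have h4 : δ n * (2*r) ≤ 2*(t n)*E^2 := by
      have hx : 0 ≤ t n * E^2 * (1 - 4*t n) :=
        mul_nonneg (mul_nonneg h3.le (sq_nonneg E)) (by linarith)
      nlinarith [hx]
    have h5 : 2*(t n)*E^2 < (t n * E) * (2*r) := by
      have := mul_lt_mul_of_pos_left hlt (mul_pos h3 hE)
      nlinarith [this]
    have h6 : δ n * (2*r) < (t n * E) * (2*r) := lt_of_le_of_lt h4 h5
    exact lt_of_mul_lt_mul_right h6 (by positivity)
  have hpa : ∀ n, p n ≠ a := by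
    intro n hcon
    have h1 := hdqp n
    rw [hcon, hq_a n] at h1
    linarith [hδlt n]
  set v : ℕ → Euc d := fun n => (t n)⁻¹ • (p n - a) with hv
  have hpq : ∀ n, ‖p n - q n‖ = δ n := by
    intro n
    rw [← dist_eq_norm, dist_comm]
    exact hdqp n
  have hve : ∀ n, ‖v n - e‖ ≤ E^2*(4*(t n)+1)/(2*r) := by
    intro n
    have h1 : v n - e = (t n)⁻¹ • (p n - q n) := by
      have hc : (t n)⁻¹ * t n = 1 := inv_mul_cancel₀ (ht0 n).ne'
      rw [hv, hq]
      simp only [smul_sub, smul_add, smul_smul, hc, one_smul]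
      abel
    have h2 : ‖v n - e‖ = (t n)⁻¹ * δ n := by
      rw [h1, norm_smul, norm_inv, Real.norm_eq_abs, abs_of_pos (ht0 n), hpq n]
    rw [h2, inv_mul_eq_div, div_le_div_iff₀ (ht0 n) (by positivity : (0:ℝ) < 2*r)]
    calc δ n * (2*r) ≤ t n * E^2*(4*t n+1) := hδb n
      _ = E^2*(4*t n+1) * t n := by ring
  have hvb : ∀ n, v n ∈ closedBall (0 : Euc d) (2*E) := by
    intro n
    rw [mem_closedBall, dist_zero_right]
    have h1 := hve n
    have h2 : E^2*(4*(t n)+1)/(2*r) ≤ E := by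
      rw [div_le_iff₀ (by positivity : (0:ℝ) < 2*r)]
      have h3 : 4*(t n)+1 ≤ 2 := by linarith [ht4 n]
      nlinarith [hE, hlt, sq_nonneg E, (ht0 n).le]
    have h4 : ‖v n‖ ≤ ‖e‖ + ‖v n - e‖ := by
      have := norm_add_le e (v n - e)
      simpa using this
    rw [← hEdef] at h4
    linarith
  obtain ⟨w, -, φ, hφ, hwlim⟩ := tendsto_subseq_of_bounded Metric.isBounded_closedBall hvb
  have htlim : Tendsto (fun n : ℕ => t n) atTop (𝓝 0) := by
    apply squeeze_zero (fun n => (ht0 n).le) (g := fun n : ℕ => 1/((n:ℝ)+1))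
    · intro n
      rw [ht]
      simp only
      apply div_le_div_of_nonneg_left one_pos.le (by positivity)
      have : (0:ℝ) ≤ (n:ℝ) := Nat.cast_nonneg n
      linarith
    · exact tendsto_one_div_add_atTop_nhds_zero_nat
  have htphi : Tendsto (fun k => t (φ k)) atTop (𝓝 0) := htlim.comp hφ.tendsto_atTop
  have hplim : Tendsto (fun k => p (φ k)) atTop (𝓝 a) := by
    rw [tendsto_iff_dist_tendsto_zero]
    apply squeeze_zero (fun k => dist_nonneg) (g := fun k => 2 * t (φ k) * E)
    · intro k
      have h1 : dist (p (φ k)) a ≤ dist (p (φ k)) (q (φ k)) + dist (q (φ k)) a :=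
        dist_triangle _ _ _
      rw [dist_comm (p (φ k)) (q (φ k)), hdqp, hq_a] at h1
      have := (hδle (φ k))
      linarith
    · have : Tendsto (fun k => 2 * t (φ k) * E) atTop (𝓝 (2 * 0 * E)) :=
        (htphi.const_mul 2).mul_const E
      simpa using this
  have hwtan : w ∈ tanCone A a := by
    right
    refine ⟨fun k => p (φ k), fun k => (t (φ k))⁻¹, fun k => ⟨hpA _, hpa _⟩, hplim,
      fun k => inv_pos.mpr (ht0 _), ?_⟩
    exact hwlim
  -- the distance from w to e
  have hNb : ‖w - e‖ ≤ E^2/(2*r) := by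
    have h1 : Tendsto (fun k => ‖v (φ k) - e‖) atTop (𝓝 ‖w - e‖) :=
      ((hwlim.sub tendsto_const_nhds).norm)
    have h2 : Tendsto (fun k => E^2*(4*(t (φ k))+1)/(2*r)) atTop (𝓝 (E^2/(2*r))) := by
      have h3 : Tendsto (fun k => E^2*(4*(t (φ k))+1)/(2*r)) atTop
          (𝓝 (E^2*(4*0+1)/(2*r))) := by
        apply Tendsto.div_const
        apply Tendsto.const_mul
        exact ((htphi.const_mul 4).add tendsto_const_nhds)
      simpa using h3
    exact le_of_tendsto_of_tendsto h1 h2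
      (Filter.Eventually.of_forall fun k => hve (φ k))
  -- endgame: trigonometry
  set V := ‖w‖ with hVdef
  set N := ‖e - w‖ with hNdef
  have hN : N ≤ E^2/(2*r) := by rw [hNdef, norm_sub_rev]; exact hNb
  have hN0 : 0 ≤ N := norm_nonneg _
  have hD : E^2/(2*r) < E/2 := by
    rw [div_lt_div_iff₀ (by positivity) (by norm_num)]
    nlinarith [hE, hlt]
  have hNE : N < E/2 := lt_of_le_of_lt hN hD
  have hV : E/2 < V := by
    have h1 : E - V ≤ N := by
      have := abs_norm_sub_norm_le e w
      rw [← hNdef, ← hEdef, ← hVdef] at this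
      have := le_of_abs_le this
      linarith [this]
    linarith
  have hV0 : 0 < V := by linarith [hE]
  have hw0 : w ≠ 0 := by
    intro hcon
    rw [hVdef, hcon, norm_zero] at hV0
    exact lt_irrefl 0 hV0
  set P := (⟪e, w⟫ : ℝ) with hPdef
  have hPN : N^2 = E^2 - 2*P + V^2 := by
    rw [hNdef, hPdef, hEdef, hVdef]
    exact norm_sub_sq_real e w
  have hP0 : 0 < P := by nlinarith [hNE, hN0, sq_nonneg V, hE]
  have hPsq : (E^2 - N^2) * V^2 ≤ P^2 := by nlinarith [sq_nonneg (E^2 - N^2 - V^2)]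
  have hEV : 0 < E*V := mul_pos hE hV0
  set co := P/(E*V) with hco
  have hc0 : 0 < co := div_pos hP0 hEV
  have hc1 : co ≤ 1 := by
    rw [hco, div_le_one hEV]
    have := real_inner_le_norm e w
    rw [← hPdef, ← hEdef, ← hVdef] at this
    exact this
  have hangle : InnerProductGeometry.angle e w = Real.arccos co := rfl
  have hN2 : N^2 ≤ (E^2/(2*r))^2 := by nlinarith [hN, hN0]
  have h1c : 1 - co^2 ≤ (E/(2*r))^2 := by
    have hformula : co^2 * (E*V)^2 = P^2 := by
      rw [hco, div_pow, div_mul_cancel₀]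
      exact pow_ne_zero 2 hEV.ne'
    have expand : (1 - co^2) * (E*V)^2 = (E*V)^2 - P^2 := by
      rw [sub_mul, one_mul, hformula]
    have hstep1 : (E*V)^2 - P^2 ≤ N^2 * V^2 := by nlinarith [hPsq]
    have hstep2 : N^2*V^2 ≤ (E^2/(2*r))^2 * V^2 :=
      mul_le_mul_of_nonneg_right hN2 (sq_nonneg V)
    have hstep3 : (E^2/(2*r))^2 * V^2 = (E/(2*r))^2 * (E*V)^2 := by ring
    have hfin : (1 - co^2) * (E*V)^2 ≤ (E/(2*r))^2 * (E*V)^2 := by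
      rw [expand]
      calc (E*V)^2 - P^2 ≤ N^2 * V^2 := hstep1
        _ ≤ (E^2/(2*r))^2 * V^2 := hstep2
        _ = (E/(2*r))^2 * (E*V)^2 := hstep3
    exact le_of_mul_le_mul_right hfin (by positivity)
  have hsinb : Real.sin (Real.arccos co) ≤ E/(2*r) := by
    rw [Real.sin_arccos]
    calc Real.sqrt (1 - co^2) ≤ Real.sqrt ((E/(2*r))^2) := Real.sqrt_le_sqrt h1c
      _ = E/(2*r) := Real.sqrt_sq (by positivity)
  have hθ0 : 0 ≤ Real.arccos co := Real.arccos_nonneg co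
  have hθ2 : Real.arccos co < Real.pi/2 := Real.arccos_lt_pi_div_two.mpr hc0
  have hκ : E/(2*r) < 1/2 := by
    rw [div_lt_div_iff₀ (by positivity) (by norm_num)]
    nlinarith [hE, hlt]
  have hpi := Real.pi_pos
  have hθ6 : Real.arccos co < Real.pi/6 := by
    by_contra hcon
    push_neg at hcon
    have hmem1 : Real.pi/6 ∈ Icc (-(Real.pi/2)) (Real.pi/2) := by
      constructor <;> [linarith; linarith]
    have hmem2 : Real.arccos co ∈ Icc (-(Real.pi/2)) (Real.pi/2) := by
      constructor <;> [linarith; linarith]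
    have := Real.strictMonoOn_sin.monotoneOn hmem1 hmem2 hcon
    rw [Real.sin_pi_div_six] at this
    linarith
  refine ⟨w, hwtan, hw0, ?_⟩
  rw [show InnerProductGeometry.angle (b - a) w = Real.arccos co from hangle]
  rcases eq_or_lt_of_le hθ0 with hz | hz
  · rw [← hz]
    exact mul_pos (by positivity) (div_pos hE hr)
  · set θ := Real.arccos co with hθdef
    set s := 6*θ/Real.pi with hs
    have hs0 : 0 < s := by
      rw [hs]
      exact div_pos (by linarith) hpi
    have hs1 : s < 1 := by
      rw [hs, div_lt_one hpi]
      linarith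
    have hconc := strictConcaveOn_sin_Icc.2 (x := 0) (y := Real.pi/6)
      ⟨le_rfl, hpi.le⟩ ⟨by positivity, by linarith⟩ (ne_of_lt (by positivity))
      (sub_pos.mpr hs1) hs0 (by ring)
    have heval : (1 - s) • (0:ℝ) + s • (Real.pi/6) = θ := by
      rw [smul_eq_mul, smul_eq_mul, hs]
      field_simp; ring
    rw [heval] at hconc
    rw [Real.sin_zero, Real.sin_pi_div_six, smul_eq_mul, smul_eq_mul] at hconc
    -- hconc : (1-s)*0 + s*(1/2) < sin θ
    have hfin : 3*θ/Real.pi < E/(2*r) := by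
      have h7 : s * (1/2) = 3*θ/Real.pi := by rw [hs]; ring
      have h8 : Real.sin θ ≤ E/(2*r) := hsinb
      nlinarith [hconc]
    rw [div_lt_iff₀ hpi] at hfin
    have hgoal_eq : Real.pi/6*(E/r) = (E/(2*r)*Real.pi)/3 := by ring
    rw [hgoal_eq]
    linarith
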